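/- Pointwise energy identity for the basic estimate: let U ⊆ ℝ² be open, let ζ : U → ℝ be twice continuously differentiable, and let (y,t) ∈ U with y ≠ 0, 1 + ζ(y,t) > 0 and 1 + ζ(y,t) + y∂_yζ(y,t) > 0 in a neighborhood of (y,t). Define H₁(y,t) = −(1+ζ)^{−2γ}(1+ζ+y∂_yζ)^{−γ} ∂_y((1+ζ)² y³ ∂_tζ) + ∂_y((1+ζ)^{−2} y³ ∂_tζ) and E₀(a,b) = (1/(γ−1))[(1+a)^{2−2γ}(1+a+b)^{1−γ} − 3(γ−1)(1+a)^{−1} + (γ−1)(1+a)^{−2} b + (3γ−4)]. Then H₁(y,t) = ∂_t [ y² E₀(ζ(y,t), y∂_yζ(y,t)) ]. -/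

import Mathlib

open Real Set

/-- Pointwise energy identity for the basic estimate: for a C² perturbation ζ on an open set
U ⊆ ℝ², at any point (y,t) ∈ U with y ≠ 0 and the physical positivity conditions holding
near (y,t), the quantity H₁(y,t) equals the time derivative of y² E₀(ζ, y∂_yζ). -/
theorem stmt_14 (γ : ℝ) (hγ : 1 < γ) (U : Set (ℝ × ℝ)) (hU : IsOpen U)
    (ζ : ℝ → ℝ → ℝ)
    (hζ : ContDiffOn ℝ 2 (fun p : ℝ × ℝ => ζ p.1 p.2) U)
    (y t : ℝ) (hyt : (y, t) ∈ U) (hy : y ≠ 0)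
    (hpos : ∀ᶠ p : ℝ × ℝ in nhds (y, t),
      0 < 1 + ζ p.1 p.2 ∧ 0 < 1 + ζ p.1 p.2 + p.1 * deriv (fun a => ζ a p.2) p.1) :
    let ζy : ℝ → ℝ → ℝ := fun a b => deriv (fun a' => ζ a' b) a;
    let ζt : ℝ → ℝ → ℝ := fun a b => deriv (fun b' => ζ a b') b;
    let E₀ : ℝ → ℝ → ℝ := fun a b =>
      (1 / (γ - 1)) * ((1 + a) ^ (2 - 2 * γ) * (1 + a + b) ^ (1 - γ)
        - 3 * (γ - 1) * (1 + a) ^ (-1 : ℝ) + (γ - 1) * (1 + a) ^ (-2 : ℝ) * b + (3 * γ - 4));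
    -(1 + ζ y t) ^ (-(2 * γ)) * (1 + ζ y t + y * ζy y t) ^ (-γ) *
        deriv (fun a => (1 + ζ a t) ^ 2 * a ^ 3 * ζt a t) y
      + deriv (fun a => (1 + ζ a t) ^ (-2 : ℝ) * a ^ 3 * ζt a t) y
      = deriv (fun s => y ^ 2 * E₀ (ζ y s) (y * ζy y s)) t := by
  intro ζy ζt E₀
  simp only [ζy, ζt, E₀]
  have hF2 : ContDiffAt ℝ 2 (fun p : ℝ×ℝ => ζ p.1 p.2) (y,t) :=
    hζ.contDiffAt (hU.mem_nhds hyt)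
  set F : ℝ×ℝ → ℝ := fun p => ζ p.1 p.2 with hFdef
  set f' : (ℝ×ℝ) → (ℝ×ℝ →L[ℝ] ℝ) := fderiv ℝ F with hf'def
  have hFdiff : ∀ᶠ p : ℝ×ℝ in nhds (y,t), DifferentiableAt ℝ F p := by
    filter_upwards [hF2.eventually (by simp)] with p hp
    exact hp.differentiableAt two_ne_zero
  have keyt : ∀ᶠ p : ℝ×ℝ in nhds (y,t),
      deriv (fun s => ζ p.1 s) p.2 = f' p (0,1) := by
    filter_upwards [hFdiff] with p hp
    have hc : HasDerivAt (fun s : ℝ => (p.1, s)) ((0:ℝ),(1:ℝ)) p.2 :=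
      (hasDerivAt_const p.2 p.1).prodMk (hasDerivAt_id p.2)
    exact (hp.hasFDerivAt.comp_hasDerivAt p.2 hc).deriv
  have keyy : ∀ᶠ p : ℝ×ℝ in nhds (y,t),
      deriv (fun a => ζ a p.2) p.1 = f' p (1,0) := by
    filter_upwards [hFdiff] with p hp
    have hc : HasDerivAt (fun a : ℝ => (a, p.2)) ((1:ℝ),(0:ℝ)) p.1 :=
      (hasDerivAt_id p.1).prodMk (hasDerivAt_const p.1 p.2)
    exact (hp.hasFDerivAt.comp_hasDerivAt p.1 hc).deriv
  have hf'd : DifferentiableAt ℝ f' (y,t) :=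
    (hF2.fderiv_right (m := 1) (le_refl 2)).differentiableAt one_ne_zero
  set f'' := fderiv ℝ f' (y,t) with hf''def
  set P := f' (y,t) (1,0) with hPdef
  set Q := f' (y,t) (0,1) with hQdef
  set M := f'' (1,0) (0,1) with hMdef
  -- mixed partials
  have hMaζ : HasDerivAt (fun a => deriv (fun b' => ζ a b') t) M y := by
    have hc : HasDerivAt (fun a : ℝ => (a, t)) ((1:ℝ),(0:ℝ)) y :=
      (hasDerivAt_id y).prodMk (hasDerivAt_const y t)
    have h1 := hf'd.hasFDerivAt.comp_hasDerivAt y hc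
    have h2 : HasDerivAt (fun _ : ℝ => ((0:ℝ),(1:ℝ))) 0 y := hasDerivAt_const y ((0:ℝ),(1:ℝ))
    have h := HasDerivAt.clm_apply h1 h2
    simp only [add_zero, map_zero] at h
    have hev : ∀ᶠ a in nhds y, deriv (fun b' => ζ a b') t = f' (a,t) (0,1) :=
      ((continuous_id.prodMk continuous_const).continuousAt (x := y)).eventually keyt
    exact h.congr_of_eventuallyEq hev
  have hsymm : f'' (0,1) (1,0) = M := hF2.isSymmSndFDerivAt (by simp [minSmoothness_of_isRCLikeNormedField]) _ _
  have hMtζ : HasDerivAt (fun s => deriv (fun a' => ζ a' s) y) M t := by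
    have hc : HasDerivAt (fun s : ℝ => (y, s)) ((0:ℝ),(1:ℝ)) t :=
      (hasDerivAt_const t y).prodMk (hasDerivAt_id t)
    have h1 := hf'd.hasFDerivAt.comp_hasDerivAt t hc
    have h2 : HasDerivAt (fun _ : ℝ => ((1:ℝ),(0:ℝ))) 0 t := hasDerivAt_const t ((1:ℝ),(0:ℝ))
    have h := HasDerivAt.clm_apply h1 h2
    simp only [add_zero, map_zero] at h
    rw [hsymm] at h
    have hev : ∀ᶠ s in nhds t, deriv (fun a' => ζ a' s) y = f' (y,s) (1,0) :=
      ((continuous_const.prodMk continuous_id).continuousAt (x := t)).eventually keyy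
    exact h.congr_of_eventuallyEq hev
  -- first partials at the point
  have hζa : HasDerivAt (fun a => ζ a t) P y := by
    have hc : HasDerivAt (fun a : ℝ => (a, t)) ((1:ℝ),(0:ℝ)) y :=
      (hasDerivAt_id y).prodMk (hasDerivAt_const y t)
    exact (hFdiff.self_of_nhds.hasFDerivAt.comp_hasDerivAt y hc)
  have hζb : HasDerivAt (fun s => ζ y s) Q t := by
    have hc : HasDerivAt (fun s : ℝ => (y, s)) ((0:ℝ),(1:ℝ)) t :=
      (hasDerivAt_const t y).prodMk (hasDerivAt_id t)
    exact (hFdiff.self_of_nhds.hasFDerivAt.comp_hasDerivAt t hc)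
  have eP : deriv (fun a' => ζ a' t) y = P := keyy.self_of_nhds
  have eQ : deriv (fun b' => ζ y b') t = Q := keyt.self_of_nhds
  -- positivity
  obtain ⟨hu, hv⟩ := hpos.self_of_nhds
  rw [eP] at hv
  -- derivative computations
  have h1 : HasDerivAt (fun a => 1 + ζ a t) P y := hζa.const_add 1
  have hu1 : HasDerivAt (fun s => 1 + ζ y s) Q t := hζb.const_add 1
  have hL1 := (show
      HasDerivAt (fun a => (1 + ζ a t) ^ 2 * a ^ 3 * deriv (fun b' => ζ a b') t) _ y from (((h1.pow 2).mul (hasDerivAt_pow 3 y)).mul hMaζ)).deriv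
  have hL2 := (show
      HasDerivAt (fun a => (1 + ζ a t) ^ (-2:ℝ) * a ^ 3 * deriv (fun b' => ζ a b') t) _ y from (((h1.rpow_const (Or.inl hu.ne')).mul (hasDerivAt_pow 3 y)).mul hMaζ)).deriv
  -- RHS
  have hyP : HasDerivAt (fun s => y * deriv (fun a' => ζ a' s) y) (y*M) t := hMtζ.const_mul y
  have hv1 : HasDerivAt (fun s => 1 + ζ y s + y * deriv (fun a' => ζ a' s) y) (Q + y*M) t :=
    hu1.add hyP
  have hvne : (1 + ζ y t + y * deriv (fun a' => ζ a' t) y) ≠ 0 := by rw [eP]; exact hv.ne'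
  have g1 := hu1.rpow_const (p := 2 - 2*γ) (Or.inl hu.ne')
  have g2 := hv1.rpow_const (p := 1 - γ) (Or.inl hvne)
  have g3 := (hu1.rpow_const (p := (-1:ℝ)) (Or.inl hu.ne')).const_mul (3*(γ-1))
  have g4 := ((hu1.rpow_const (p := (-2:ℝ)) (Or.inl hu.ne')).const_mul (γ-1)).mul hyP
  have g6 := (((((g1.mul g2).sub g3).add g4).add_const (3*γ-4)).const_mul
      (1/(γ-1))).const_mul (y^2)
  have dR := (show HasDerivAt (fun s => y ^ 2 *
      ((1 / (γ - 1)) * ((1 + ζ y s) ^ (2 - 2 * γ) *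
          (1 + ζ y s + y * deriv (fun a' => ζ a' s) y) ^ (1 - γ)
        - 3 * (γ - 1) * (1 + ζ y s) ^ (-1 : ℝ)
        + (γ - 1) * (1 + ζ y s) ^ (-2 : ℝ) * (y * deriv (fun a' => ζ a' s) y)
        + (3 * γ - 4)))) _ t from g6).deriv
  rw [hL1, hL2, dR, eP, eQ]
  have hu' : (0:ℝ) < 1 + ζ y t := hu
  have hv' : (0:ℝ) < 1 + ζ y t + y * P := hv
  have e1 : (1 + ζ y t) ^ (2 - 2*γ - 1) = (1 + ζ y t) * (1 + ζ y t) ^ (-(2*γ)) := by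
    rw [show (2 - 2*γ - 1) = 1 + -(2*γ) by ring, Real.rpow_add hu', Real.rpow_one]
  have e2 : (1 + ζ y t) ^ (2 - 2*γ) = (1 + ζ y t) ^ 2 * (1 + ζ y t) ^ (-(2*γ)) := by
    rw [show (2 - 2*γ) = ((2:ℕ):ℝ) + -(2*γ) by push_cast; ring, Real.rpow_add hu',
      Real.rpow_natCast]
  have e3 : (1 + ζ y t + y * P) ^ (1 - γ) = (1 + ζ y t + y * P) * (1 + ζ y t + y * P) ^ (-γ) := by
    rw [show (1 - γ) = 1 + -γ by ring, Real.rpow_add hv', Real.rpow_one]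
  have e4 : (1 + ζ y t + y * P) ^ (1 - γ - 1) = (1 + ζ y t + y * P) ^ (-γ) := by
    rw [show (1 - γ - 1) = -γ by ring]
  have e5 : (1 + ζ y t) ^ ((-1:ℝ) - 1) = (1 + ζ y t) ^ (-2:ℝ) := by norm_num
  rw [e1, e2, e3, e4, e5]
  have hγ' : γ - 1 ≠ 0 := sub_ne_zero.2 (ne_of_gt hγ)
  simp only [Pi.pow_apply, Pi.mul_apply]
  field_simp
  ring
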